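/- Let a Max-3DM-2 instance with |A| = |B| = |C| = n and a real 0 < ε < 1 be given, and construct the associated scheduling instance. If the scheduling instance admits a feasible schedule of makespan at most 63n − 3k(1−ε) for some integer 0 ≤ k ≤ n, then the Max-3DM-2 instance admits a matching of size至 least k. -/

import Mathlib

/-!  Coupled-task scheduling with compatibility constraints. -/

/-- A coupled-task `(a, L, b)`: a first sub-task of processing time `a`,
an idle period of length `L`, then a second sub-task of processing time `b`. -/
structure CTask where
  a : ℝ
  L : ℝ
  b : ℝ

namespace CTask

/-- The set of time instants occupied by the task when started at time `s`. -/
def occupied (t : CTask) (s : ℝ) : Set ℝ :=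
  Set.Ico s (s + t.a) ∪ Set.Ico (s + t.a + t.L) (s + t.a + t.L + t.b)

/-- The idle window of the task when started at time `s`. -/
def idleWindow (t : CTask) (s : ℝ) : Set ℝ :=
  Set.Ico (s + t.a) (s + t.a + t.L)

/-- The span of the task when started at time `s`. -/
def span (t : CTask) (s : ℝ) : Set ℝ :=
  Set.Ico s (s + t.a + t.L + t.b)

/-- Total duration `a + L + b` of a coupled-task. -/
def dur (t : CTask) : ℝ := t.a + t.L + t.b

/-- All three components of the task are positive. -/
def Positive (t : CTask) : Prop := 0 < t.a ∧ 0 < t.L ∧ 0 < t.b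

end CTask

/-- The stretched coupled-task with stretch factor `α`, i.e. `(α, α, α)`. -/
def stretched (α : ℝ) : CTask := ⟨α, α, α⟩

/-- A scheduling instance: a coupled-task for each index, together with a
compatibility relation.  `compat t' t` means that the compatibility graph
contains the arc `(t', t)` (so `t'` may be executed during the idle window of
`t`); an undirected edge `{t, t'}` is modelled by `compat t' t ∧ compat t t'`. -/
structure SchedInstance (ι : Type*) where
  task : ι → CTask
  compat : ι → ι → Prop

namespace SchedInstance

variable {ι : Type*}

/-- A schedule `σ` (assigning a start time to every task) is feasible if all
start times are nonnegative, occupied intervals of distinct tasks are pairwise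
disjoint, and whenever an occupied interval of `t'` meets the idle window of
`t`, the compatibility graph contains the arc (or edge) from `t'` to `t`. -/
def Feasible (I : SchedInstance ι) (σ : ι → ℝ) : Prop :=
  (∀ t, 0 ≤ σ t) ∧
  (∀ t t', t ≠ t' →
    Disjoint ((I.task t).occupied (σ t)) ((I.task t').occupied (σ t'))) ∧
  (∀ t t', t ≠ t' →
    (((I.task t').occupied (σ t')) ∩ ((I.task t).idleWindow (σ t))).Nonempty →
      I.compat t' t)

/-- Completion time of task `t` under schedule `σ`. -/
def endTime (I : SchedInstance ι) (σ : ι → ℝ) (t : ι) : ℝ :=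
  σ t + (I.task t).dur

/-- The makespan of `σ` is at most `C`. -/
def MakespanLE (I : SchedInstance ι) (σ : ι → ℝ) (C : ℝ) : Prop :=
  ∀ t, I.endTime σ t ≤ C

/-- The makespan of `σ` is exactly `C`. -/
def MakespanEq (I : SchedInstance ι) (σ : ι → ℝ) (C : ℝ) : Prop :=
  I.MakespanLE σ C ∧ ∃ t, I.endTime σ t = C

end SchedInstance

/-- An instance of Max-3DM-2: pairwise disjoint finite sets `A`, `B`, `C` of
equal cardinality and a set `T ⊆ A × B × C` of triples such that every element
of `A ∪ B ∪ C` occurs in exactly two triples of `T`. -/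
structure Max3DM2 (U : Type*) [DecidableEq U] where
  A : Finset U
  B : Finset U
  C : Finset U
  T : Finset (U × U × U)
  disjAB : Disjoint A B
  disjAC : Disjoint A C
  disjBC : Disjoint B C
  cardB : B.card = A.card
  cardC : C.card = A.card
  memT : ∀ t ∈ T, t.1 ∈ A ∧ t.2.1 ∈ B ∧ t.2.2 ∈ C
  occ2 : ∀ x ∈ A ∪ B ∪ C,
    (T.filter fun t => t.1 = x ∨ t.2.1 = x ∨ t.2.2 = x).card = 2

namespace Max3DM2

variable {U : Type*} [DecidableEq U]

/-- Task indices of the associated scheduling instance: an item task for each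
element of `A ∪ B ∪ C` (left), an item task `t'ᵢ` for each triple (middle),
and a box task `tᵢ` for each triple (right). -/
abbrev Idx (P : Max3DM2 U) : Type _ :=
  {x // x ∈ P.A ∪ P.B ∪ P.C} ⊕ ({t // t ∈ P.T} ⊕ {t // t ∈ P.T})

/-- The scheduling instance associated with a Max-3DM-2 instance and `ε`:
element items have stretch factor `1`, items `t'ᵢ` have stretch factor `2 + ε`,
boxes have stretch factor `9`; the compatibility graph contains exactly the
arcs `(x, tᵢ)` for each element `x` occurring in the triple `tᵢ`, and the arcs
`(t'ᵢ, tᵢ)`. -/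
def inst (P : Max3DM2 U) (ε : ℝ) : SchedInstance P.Idx where
  task := fun i => match i with
    | .inl _ => stretched 1
    | .inr (.inl _) => stretched (2 + ε)
    | .inr (.inr _) => stretched 9
  compat := fun i j => match i, j with
    | .inl x, .inr (.inr t) =>
        t.val.1 = x.val ∨ t.val.2.1 = x.val ∨ t.val.2.2 = x.val
    | .inr (.inl t'), .inr (.inr t) => t'.val = t.val
    | _, _ => False

/-- A matching: a set of pairwise disjoint triples of `T`. -/
def IsMatching (P : Max3DM2 U) (M : Finset (U × U × U)) : Prop :=
  M ⊆ P.T ∧ ∀ p ∈ M, ∀ q ∈ M, p ≠ q →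
    p.1 ≠ q.1 ∧ p.2.1 ≠ q.2.1 ∧ p.2.2 ≠ q.2.2

end Max3DM2


open Set

/-- Occupied set of a stretched task, in normal form. -/
def occS (s α : ℝ) : Set ℝ := Ico s (s+α) ∪ Ico (s+α+α) (s+α+α+α)
/-- Idle window of a stretched task, in normal form. -/
def winS (s α : ℝ) : Set ℝ := Ico (s+α) (s+α+α)
/-- Span of a stretched task, in normal form. -/
def spanS (s α : ℝ) : Set ℝ := Ico s (s+α+α+α)

lemma mem_occS_self {s α : ℝ} (h : 0 < α) : s ∈ occS s α :=
  Or.inl ⟨le_refl s, by linarith⟩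

lemma occS_subset_spanS {s α : ℝ} (h : 0 < α) : occS s α ⊆ spanS s α := by
  rintro x (⟨h1, h2⟩ | ⟨h1, h2⟩) <;> exact ⟨by linarith, by linarith⟩

lemma winS_subset_spanS {s α : ℝ} (h : 0 < α) : winS s α ⊆ spanS s α := by
  rintro x ⟨h1, h2⟩; exact ⟨by linarith, by linarith⟩

lemma mem_spanS_cases {s α x : ℝ} (hx : x ∈ spanS s α) :
    x ∈ occS s α ∨ x ∈ winS s α := by
  obtain ⟨h1, h2⟩ := hx
  rcases lt_or_ge x (s+α) with h | h
  · exact Or.inl (Or.inl ⟨h1, h⟩)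
  rcases lt_or_ge x (s+α+α) with h' | h'
  · exact Or.inr ⟨h, h'⟩
  · exact Or.inl (Or.inr ⟨h', h2⟩)

/-- Core geometry: if the occupied sets are disjoint and neither occupied set
meets the other's idle window, the spans are disjoint. -/
lemma spanS_disj {α β s r : ℝ} (hα : 0 < α) (hβ : 0 < β)
    (h1 : occS s α ∩ occS r β = ∅)
    (h2 : occS s α ∩ winS r β = ∅)
    (h3 : occS r β ∩ winS s α = ∅) :
    spanS s α ∩ spanS r β = ∅ := by
  by_contra h
  obtain ⟨x, hxs, hxr⟩ := Set.nonempty_iff_ne_empty.2 h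
  rcases le_total s r with hsr | hsr
  · have hr : r ∈ spanS s α := ⟨hsr, by have := hxr.1; have := hxs.2; linarith⟩
    rcases mem_spanS_cases hr with h' | h'
    · exact absurd (Set.mem_inter h' (mem_occS_self hβ) : r ∈ occS s α ∩ occS r β)
        (by simp [h1])
    · exact absurd (Set.mem_inter (mem_occS_self hβ) h' : r ∈ occS r β ∩ winS s α)
        (by simp [h3])
  · have hs : s ∈ spanS r β := ⟨hsr, by have := hxs.1; have := hxr.2; linarith⟩
    rcases mem_spanS_cases hs with h' | h'
    · exact absurd (Set.mem_inter (mem_occS_self hα) h' : s ∈ occS s α ∩ occS r β)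
        (by simp [h1])
    · exact absurd (Set.mem_inter (mem_occS_self hα) h' : s ∈ occS s α ∩ winS r β)
        (by simp [h2])

/-- If a small task's occupied set meets a box's idle window (box stretch 9)
and avoids the box's occupied set, then the small task's whole span is
contained in the box's window. -/
lemma hosted_span_sub {α s w : ℝ} (hα : 0 < α) (hα3 : α ≤ 3)
    (hne : (occS s α ∩ winS w 9).Nonempty)
    (hdisj : occS s α ∩ occS w 9 = ∅) :
    spanS s α ⊆ winS w 9 := by
  obtain ⟨p, hpo, hpw⟩ := hne
  have hps : p ∈ spanS s α := occS_subset_spanS hα hpo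
  have hpw1 : w + 9 ≤ p := hpw.1
  have hpw2 : p < w + 9 + 9 := hpw.2
  have hs : w + 9 ≤ s := by
    by_contra h
    push_neg at h
    have hsw : w ≤ s := by have := hps.2; linarith
    have : s ∈ occS s α ∩ occS w 9 :=
      ⟨mem_occS_self hα, Or.inl ⟨hsw, by linarith⟩⟩
    simp [hdisj] at this
  have he : s + α + α + α ≤ w + 9 + 9 := by
    by_contra h
    push_neg at h
    set q := max (s + α + α) (w + 9 + 9) with hq
    have hq1 : q ∈ occS s α := Or.inr ⟨le_max_left _ _,
      max_lt (by linarith) (by linarith)⟩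
    have hq2 : q ∈ occS w 9 := Or.inr ⟨le_max_right _ _,
      max_lt (by have := hps.1; linarith) (by linarith)⟩
    have : q ∈ occS s α ∩ occS w 9 := ⟨hq1, hq2⟩
    simp [hdisj] at this
  intro x hx
  exact ⟨le_trans hs hx.1, lt_of_lt_of_le hx.2 he⟩

section Main

variable {U : Type*} [DecidableEq U]

/-- Stretch factor of each task of the associated instance. -/
def stf (P : Max3DM2 U) (ε : ℝ) : P.Idx → ℝ
  | .inl _ => 1
  | .inr (.inl _) => 2 + ε
  | .inr (.inr _) => 9

lemma stf_pos (P : Max3DM2 U) {ε : ℝ} (hε0 : 0 < ε) (i : P.Idx) :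
    0 < stf P ε i := by
  cases i with
  | inl x => norm_num [stf]
  | inr j => cases j <;> simp [stf] <;> linarith

lemma occ_eq (P : Max3DM2 U) (ε : ℝ) (σ : P.Idx → ℝ) (i : P.Idx) :
    ((P.inst ε).task i).occupied (σ i) = occS (σ i) (stf P ε i) := by
  cases i with
  | inl x => rfl
  | inr j => cases j <;> rfl

lemma win_eq (P : Max3DM2 U) (ε : ℝ) (σ : P.Idx → ℝ) (i : P.Idx) :
    ((P.inst ε).task i).idleWindow (σ i) = winS (σ i) (stf P ε i) := by
  cases i with
  | inl x => rfl
  | inr j => cases j <;> rfl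

lemma span_eq (P : Max3DM2 U) (ε : ℝ) (σ : P.Idx → ℝ) (i : P.Idx) :
    ((P.inst ε).task i).span (σ i) = spanS (σ i) (stf P ε i) := by
  cases i with
  | inl x => rfl
  | inr j => cases j <;> rfl

lemma dur_eq (P : Max3DM2 U) (ε : ℝ) (i : P.Idx) :
    ((P.inst ε).task i).dur = stf P ε i + stf P ε i + stf P ε i := by
  cases i with
  | inl x => rfl
  | inr j => cases j <;> rfl

-- compat reductions (test rfl)
example (P : Max3DM2 U) (ε : ℝ) (x : {x // x ∈ P.A ∪ P.B ∪ P.C})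
    (j : {t // t ∈ P.T}) :
    (P.inst ε).compat (Sum.inl x) (Sum.inr (Sum.inr j)) ↔
      (j.val.1 = x.val ∨ j.val.2.1 = x.val ∨ j.val.2.2 = x.val) := Iff.rfl

example (P : Max3DM2 U) (ε : ℝ) (i j : {t // t ∈ P.T}) :
    (P.inst ε).compat (Sum.inr (Sum.inl i)) (Sum.inr (Sum.inr j)) ↔
      i.val = j.val := Iff.rfl

example (P : Max3DM2 U) (ε : ℝ) (i j : {t // t ∈ P.T}) :
    ¬ (P.inst ε).compat (Sum.inr (Sum.inr i)) (Sum.inr (Sum.inr j)) :=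
  fun h => h

end Main

section Main2

open Set MeasureTheory

variable {U : Type*} [DecidableEq U]

lemma compat_to_item (P : Max3DM2 U) (ε : ℝ) (u : P.Idx)
    (x : {x // x ∈ P.A ∪ P.B ∪ P.C}) : ¬ (P.inst ε).compat u (Sum.inl x) := by
  rcases u with y | (t | t) <;> exact fun h => h

lemma compat_to_prime (P : Max3DM2 U) (ε : ℝ) (u : P.Idx)
    (t : {t // t ∈ P.T}) : ¬ (P.inst ε).compat u (Sum.inr (Sum.inl t)) := by
  rcases u with y | (s | s) <;> exact fun h => h

lemma compat_box_box (P : Max3DM2 U) (ε : ℝ) (i j : {t // t ∈ P.T}) :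
    ¬ (P.inst ε).compat (Sum.inr (Sum.inr i)) (Sum.inr (Sum.inr j)) :=
  fun h => h

variable {P : Max3DM2 U} {ε : ℝ} {σ : P.Idx → ℝ}

lemma occ_disj (hσ : (P.inst ε).Feasible σ) {i j : P.Idx} (hij : i ≠ j) :
    occS (σ i) (stf P ε i) ∩ occS (σ j) (stf P ε j) = ∅ := by
  have h := hσ.2.1 i j hij
  rw [occ_eq, occ_eq] at h
  exact Set.disjoint_iff_inter_eq_empty.1 h

lemma nowin (hσ : (P.inst ε).Feasible σ) {i j : P.Idx} (hij : j ≠ i)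
    (h : ¬ (P.inst ε).compat i j) :
    occS (σ i) (stf P ε i) ∩ winS (σ j) (stf P ε j) = ∅ := by
  by_contra h'
  rw [← Set.not_nonempty_iff_eq_empty] at h'
  push_neg at h'
  apply h
  apply hσ.2.2 j i hij
  rw [occ_eq, win_eq]
  exact h'

/-- Spans of two tasks are disjoint provided neither occupied set meets the
other's idle window. -/
lemma span_disj' (hσ : (P.inst ε).Feasible σ) (hε0 : 0 < ε) {i j : P.Idx}
    (hij : i ≠ j)
    (h2 : occS (σ i) (stf P ε i) ∩ winS (σ j) (stf P ε j) = ∅)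
    (h3 : occS (σ j) (stf P ε j) ∩ winS (σ i) (stf P ε i) = ∅) :
    spanS (σ i) (stf P ε i) ∩ spanS (σ j) (stf P ε j) = ∅ :=
  spanS_disj (stf_pos P hε0 i) (stf_pos P hε0 j) (occ_disj hσ hij) h2 h3

/-- `x` is hosted in the idle window of box `j`. -/
def hostedI (P : Max3DM2 U) (ε : ℝ) (σ : P.Idx → ℝ)
    (x : {x // x ∈ P.A ∪ P.B ∪ P.C}) (j : {t // t ∈ P.T}) : Prop :=
  (occS (σ (Sum.inl x)) (stf P ε (Sum.inl x)) ∩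
    winS (σ (Sum.inr (Sum.inr j))) (stf P ε (Sum.inr (Sum.inr j)))).Nonempty

/-- The item `t'ⱼ` is hosted in the idle window of box `j`. -/
def hostedP (P : Max3DM2 U) (ε : ℝ) (σ : P.Idx → ℝ) (j : {t // t ∈ P.T}) : Prop :=
  (occS (σ (Sum.inr (Sum.inl j))) (stf P ε (Sum.inr (Sum.inl j))) ∩
    winS (σ (Sum.inr (Sum.inr j))) (stf P ε (Sum.inr (Sum.inr j)))).Nonempty

lemma hostedI_mem (hσ : (P.inst ε).Feasible σ)
    {x : {x // x ∈ P.A ∪ P.B ∪ P.C}} {j : {t // t ∈ P.T}}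
    (h : hostedI P ε σ x j) :
    j.val.1 = x.val ∨ j.val.2.1 = x.val ∨ j.val.2.2 = x.val := by
  have := hσ.2.2 (Sum.inr (Sum.inr j)) (Sum.inl x) (by simp)
  rw [occ_eq, win_eq] at this
  exact this h

lemma hostedP_eq (hσ : (P.inst ε).Feasible σ) {i j : {t // t ∈ P.T}}
    (h : (occS (σ (Sum.inr (Sum.inl i))) (stf P ε (Sum.inr (Sum.inl i))) ∩
      winS (σ (Sum.inr (Sum.inr j))) (stf P ε (Sum.inr (Sum.inr j)))).Nonempty) :
    i = j := by
  have hc := hσ.2.2 (Sum.inr (Sum.inr j)) (Sum.inr (Sum.inl i)) (by simp)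
  rw [occ_eq, win_eq] at hc
  exact Subtype.ext (hc h)

lemma spanI_sub (hσ : (P.inst ε).Feasible σ)
    {x : {x // x ∈ P.A ∪ P.B ∪ P.C}} {j : {t // t ∈ P.T}}
    (h : hostedI P ε σ x j) :
    spanS (σ (Sum.inl x)) (stf P ε (Sum.inl x)) ⊆
      winS (σ (Sum.inr (Sum.inr j))) (stf P ε (Sum.inr (Sum.inr j))) :=
  hosted_span_sub (by show (0:ℝ) < 1; norm_num) (by show (1:ℝ) ≤ 3; norm_num) h
    (occ_disj hσ (by simp))

lemma spanP_sub (hσ : (P.inst ε).Feasible σ) (hε0 : 0 < ε) (hε1 : ε < 1) {j : {t // t ∈ P.T}}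
    (h : hostedP P ε σ j) :
    spanS (σ (Sum.inr (Sum.inl j))) (stf P ε (Sum.inr (Sum.inl j))) ⊆
      winS (σ (Sum.inr (Sum.inr j))) (stf P ε (Sum.inr (Sum.inr j))) :=
  hosted_span_sub (by show (0:ℝ) < 2 + ε; linarith)
    (by show (2:ℝ) + ε ≤ 3; linarith) h (occ_disj hσ (by simp))

lemma hostedI_unique (hσ : (P.inst ε).Feasible σ) (hε0 : 0 < ε)
    {x : {x // x ∈ P.A ∪ P.B ∪ P.C}} {j j' : {t // t ∈ P.T}}
    (h : hostedI P ε σ x j) (h' : hostedI P ε σ x j') : j = j' := by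
  by_contra hne
  have hne' : (Sum.inr (Sum.inr j) : P.Idx) ≠ Sum.inr (Sum.inr j') := by
    intro h
    apply hne
    simpa using h
  have hspan := span_disj' hσ hε0 hne'
    (nowin hσ (Ne.symm hne') (compat_box_box P ε j j'))
    (nowin hσ hne' (compat_box_box P ε j' j))
  have hx : σ (Sum.inl x) ∈ occS (σ (Sum.inl x)) (stf P ε (Sum.inl x)) :=
    mem_occS_self (stf_pos P hε0 _)
  have h1 : σ (Sum.inl x) ∈ spanS (σ (Sum.inr (Sum.inr j))) (stf P ε (Sum.inr (Sum.inr j))) :=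
    winS_subset_spanS (stf_pos P hε0 _) (spanI_sub hσ h (occS_subset_spanS (stf_pos P hε0 _) hx))
  have h2 : σ (Sum.inl x) ∈ spanS (σ (Sum.inr (Sum.inr j'))) (stf P ε (Sum.inr (Sum.inr j'))) :=
    winS_subset_spanS (stf_pos P hε0 _) (spanI_sub hσ h' (occS_subset_spanS (stf_pos P hε0 _) hx))
  have : σ (Sum.inl x) ∈ (∅ : Set ℝ) := hspan ▸ Set.mem_inter h1 h2
  exact this

end Main2

section Main3

open Set MeasureTheory

lemma vol_spanS (s α : ℝ) : volume (spanS s α) = ENNReal.ofReal (α+α+α) := by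
  rw [spanS, Real.volume_Ico]; congr 1; ring

lemma vol_winS (s α : ℝ) : volume (winS s α) = ENNReal.ofReal α := by
  rw [winS, Real.volume_Ico]; congr 1; ring

lemma sum_vol_le {ι : Type*} (s : Finset ι) (f : ι → Set ℝ)
    (hm : ∀ i ∈ s, MeasurableSet (f i))
    (hd : (s : Set ι).PairwiseDisjoint f)
    {W : Set ℝ} (hsub : ∀ i ∈ s, f i ⊆ W) :
    ∑ i ∈ s, volume (f i) ≤ volume W := by
  rw [← measure_biUnion_finset hd hm]
  exact measure_mono (Set.iUnion₂_subset hsub)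

variable {U : Type*} [DecidableEq U] {P : Max3DM2 U} {ε : ℝ} {σ : P.Idx → ℝ}

lemma item_spans_disj (hσ : (P.inst ε).Feasible σ) (hε0 : 0 < ε)
    {x y : {x // x ∈ P.A ∪ P.B ∪ P.C}} (hxy : x ≠ y) :
    Disjoint (spanS (σ (Sum.inl x)) (stf P ε (Sum.inl x)))
      (spanS (σ (Sum.inl y)) (stf P ε (Sum.inl y))) := by
  have h : (Sum.inl x : P.Idx) ≠ Sum.inl y := by
    intro h; apply hxy; simpa using h
  exact Set.disjoint_iff_inter_eq_empty.2 (span_disj' hσ hε0 h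
    (nowin hσ h.symm (compat_to_item P ε _ _))
    (nowin hσ h (compat_to_item P ε _ _)))

open Classical in
lemma window_items (hσ : (P.inst ε).Feasible σ) (hε0 : 0 < ε)
    (j : {t // t ∈ P.T}) :
    3 * (((Finset.univ.filter (fun x => hostedI P ε σ x j)).card : ℝ)) ≤ 9 := by
  set s := Finset.univ.filter (fun x => hostedI P ε σ x j) with hs
  have hb := sum_vol_le s (fun x => spanS (σ (Sum.inl x)) (stf P ε (Sum.inl x)))
    (fun i _ => measurableSet_Ico)
    (fun a _ b _ hab => item_spans_disj hσ hε0 hab)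
    (W := winS (σ (Sum.inr (Sum.inr j))) (stf P ε (Sum.inr (Sum.inr j))))
    (fun x hx => spanI_sub hσ (Finset.mem_filter.1 hx).2)
  have hterm : ∀ x : {x // x ∈ P.A ∪ P.B ∪ P.C},
      volume (spanS (σ (Sum.inl x)) (stf P ε (Sum.inl x))) = ENNReal.ofReal 3 := by
    intro x
    rw [vol_spanS]
    norm_num [stf]
  rw [Finset.sum_congr rfl (fun x _ => hterm x), Finset.sum_const,
    vol_winS] at hb
  have h9 : stf P ε (Sum.inr (Sum.inr j)) = 9 := rfl
  rw [h9, nsmul_eq_mul] at hb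
  have : ENNReal.ofReal ((s.card : ℝ) * 3) ≤ ENNReal.ofReal 9 := by
    rw [ENNReal.ofReal_mul (by positivity), ENNReal.ofReal_natCast]
    exact hb
  rw [ENNReal.ofReal_le_ofReal_iff (by norm_num)] at this
  linarith

lemma window_prime (hσ : (P.inst ε).Feasible σ) (hε0 : 0 < ε) (hε1 : ε < 1)
    {j : {t // t ∈ P.T}} (hp : hostedP P ε σ j)
    {x : {x // x ∈ P.A ∪ P.B ∪ P.C}} (hx : hostedI P ε σ x j) : False := by
  have hne : (Sum.inr (Sum.inl j) : P.Idx) ≠ Sum.inl x := by simp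
  have hd : Disjoint (spanS (σ (Sum.inr (Sum.inl j))) (stf P ε (Sum.inr (Sum.inl j))))
      (spanS (σ (Sum.inl x)) (stf P ε (Sum.inl x))) :=
    Set.disjoint_iff_inter_eq_empty.2 (span_disj' hσ hε0 hne
      (nowin hσ hne.symm (compat_to_item P ε _ _))
      (nowin hσ hne (compat_to_prime P ε _ _)))
  have hle : volume (spanS (σ (Sum.inr (Sum.inl j))) (stf P ε (Sum.inr (Sum.inl j))) ∪
      spanS (σ (Sum.inl x)) (stf P ε (Sum.inl x))) ≤
      volume (winS (σ (Sum.inr (Sum.inr j))) (stf P ε (Sum.inr (Sum.inr j)))) :=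
    measure_mono (Set.union_subset (spanP_sub hσ hε0 hε1 hp) (spanI_sub hσ hx))
  rw [measure_union hd measurableSet_Ico, vol_spanS, vol_spanS, vol_winS] at hle
  have h1 : stf P ε (Sum.inr (Sum.inl j)) = 2 + ε := rfl
  have h2 : stf P ε (Sum.inl x) = 1 := rfl
  have h9 : stf P ε (Sum.inr (Sum.inr j)) = 9 := rfl
  rw [h1, h2, h9, ← ENNReal.ofReal_add (by linarith) (by norm_num)] at hle
  rw [ENNReal.ofReal_le_ofReal_iff (by norm_num)] at hle
  linarith

end Main3

section Main4

open Set MeasureTheory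

variable {U : Type*} [DecidableEq U]

lemma Tcard (P : Max3DM2 U) : P.T.card = 2 * P.A.card := by
  classical
  have h1 : P.T.card = ∑ x ∈ P.A, (P.T.filter (fun t => t.1 = x)).card :=
    Finset.card_eq_sum_card_fiberwise (fun t ht => (P.memT t ht).1)
  have h2 : ∀ x ∈ P.A, (P.T.filter (fun t => t.1 = x)).card = 2 := by
    intro x hx
    have hocc := P.occ2 x (Finset.mem_union_left _ (Finset.mem_union_left _ hx))
    rw [← hocc]
    congr 1
    apply Finset.filter_congr
    intro t ht
    try simp only [eq_iff_iff]
    constructor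
    · exact fun h => Or.inl h
    · rintro (h | h | h)
      · exact h
      · exact absurd ((P.memT t ht).2.1) (by rw [h]; exact Finset.disjoint_left.1 P.disjAB hx)
      · exact absurd ((P.memT t ht).2.2) (by rw [h]; exact Finset.disjoint_left.1 P.disjAC hx)
  rw [h1, Finset.sum_congr rfl h2, Finset.sum_const, smul_eq_mul, mul_comm]

variable (P : Max3DM2 U) (ε : ℝ) (σ : P.Idx → ℝ)

open Classical in
/-- Footprint of each task: the span for boxes and for non-hosted small
tasks, and `∅` for hosted small tasks. -/
noncomputable def Ffun : P.Idx → Set ℝ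
  | .inl x => if ∃ j, hostedI P ε σ x j then ∅
      else spanS (σ (Sum.inl x)) (stf P ε (Sum.inl x))
  | .inr (.inl t) => if hostedP P ε σ t then ∅
      else spanS (σ (Sum.inr (Sum.inl t))) (stf P ε (Sum.inr (Sum.inl t)))
  | .inr (.inr b) => spanS (σ (Sum.inr (Sum.inr b))) (stf P ε (Sum.inr (Sum.inr b)))

end Main4

set_option maxHeartbeats 1000000
open Set MeasureTheory ENNReal

/-- if the associated scheduling instance admits a feasible
schedule of makespan at most `63n − 3k(1 − ε)` for some integer `0 ≤ k ≤ n`,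
then the Max-3DM-2 instance admits a matching of size at least `k`. -/
theorem stmt5 {U : Type*} [DecidableEq U] (P : Max3DM2 U)
    (ε : ℝ) (hε0 : 0 < ε) (hε1 : ε < 1)
    (k : ℕ) (hk : k ≤ P.A.card)
    (σ : P.Idx → ℝ) (hσ : (P.inst ε).Feasible σ)
    (hmk : (P.inst ε).MakespanLE σ (63 * (P.A.card : ℝ) - 3 * (k : ℝ) * (1 - ε))) :
    ∃ M : Finset (U × U × U), P.IsMatching M ∧ k ≤ M.card := by
  classical
  set n := P.A.card with hn
  set C : ℝ := 63 * (n : ℝ) - 3 * (k : ℝ) * (1 - ε) with hC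
  -- basic cardinalities
  have hτ : P.T.card = 2 * n := Tcard P
  have hItems : (Finset.univ : Finset {x // x ∈ P.A ∪ P.B ∪ P.C}).card = 3 * n := by
    rw [Finset.card_univ, Fintype.card_coe]
    rw [Finset.card_union_of_disjoint (by
      rw [Finset.disjoint_union_left]; exact ⟨P.disjAC, P.disjBC⟩),
      Finset.card_union_of_disjoint P.disjAB, P.cardB, P.cardC]
    ring
  have hTuniv : (Finset.univ : Finset {t // t ∈ P.T}).card = 2 * n := by
    rw [Finset.card_univ, Fintype.card_coe]; exact hτ
  -- hosted items of each window
  set HI : {t // t ∈ P.T} → Finset {x // x ∈ P.A ∪ P.B ∪ P.C} :=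
    fun j => Finset.univ.filter (fun x => hostedI P ε σ x j) with hHI
  have hHI3 : ∀ j, (HI j).card ≤ 3 := by
    intro j
    have h := window_items hσ hε0 j
    have h' : ((HI j).card : ℝ) ≤ 3 := by rw [hHI]; linarith
    exact_mod_cast h'
  have hHIP : ∀ j, hostedP P ε σ j → HI j = ∅ := by
    intro j hp
    rw [Finset.eq_empty_iff_forall_notMem]
    intro x hx
    exact window_prime hσ hε0 hε1 hp (Finset.mem_filter.1 hx).2
  -- full boxes host all their elements
  have hfull : ∀ j : {t // t ∈ P.T}, (HI j).card = 3 → ∀ v : U,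
      (v = j.val.1 ∨ v = j.val.2.1 ∨ v = j.val.2.2) →
      ∃ hv : v ∈ P.A ∪ P.B ∪ P.C, hostedI P ε σ ⟨v, hv⟩ j := by
    intro j hj3 v hv
    have hvm : v ∈ P.A ∪ P.B ∪ P.C := by
      obtain ⟨hA, hB, hC⟩ := P.memT j.val j.2
      rcases hv with h | h | h <;> subst h <;>
        simp [Finset.mem_union, hA, hB, hC]
    set S := (HI j).image (fun x => x.val) with hS
    have hsub : S ⊆ {j.val.1, j.val.2.1, j.val.2.2} := by
      intro v' hv'
      obtain ⟨x, hx, hxv⟩ := Finset.mem_image.1 hv'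
      have hm := hostedI_mem hσ (Finset.mem_filter.1 hx).2
      subst hxv
      rcases hm with h | h | h <;> simp [Finset.mem_insert, h.symm]
    have hScard : S.card = 3 := by
      rw [hS, Finset.card_image_of_injective _ Subtype.val_injective, hj3]
    have hc3 : ({j.val.1, j.val.2.1, j.val.2.2} : Finset U).card ≤ S.card := by
      rw [hScard]
      refine le_trans (Finset.card_insert_le _ _) ?_
      exact Nat.succ_le_succ (le_trans (Finset.card_insert_le _ _) (by simp))
    have heq : S = ({j.val.1, j.val.2.1, j.val.2.2} : Finset U) :=
      Finset.eq_of_subset_of_card_le hsub hc3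
    have hvS : v ∈ S := by
      rw [heq]; rcases hv with h | h | h <;> simp [h]
    obtain ⟨x, hx, hxv⟩ := Finset.mem_image.1 hvS
    refine ⟨hvm, ?_⟩
    have he : (⟨v, hvm⟩ : {x // x ∈ P.A ∪ P.B ∪ P.C}) = x := Subtype.ext hxv.symm
    rw [he]
    exact (Finset.mem_filter.1 hx).2
  set M' : Finset {t // t ∈ P.T} :=
    Finset.univ.filter (fun j => (HI j).card = 3) with hM'
  set B' : Finset {t // t ∈ P.T} :=
    Finset.univ.filter (fun j => hostedP P ε σ j) with hB'
  -- the matching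
  set M : Finset (U × U × U) := M'.image (fun j => j.val) with hM
  have hMcard : M.card = M'.card :=
    Finset.card_image_of_injective _ Subtype.val_injective
  have hMatch : P.IsMatching M := by
    constructor
    · intro p hp
      obtain ⟨j, hj, hjp⟩ := Finset.mem_image.1 hp
      exact hjp ▸ j.2
    · intro p hp q hq hpq
      obtain ⟨j, hj, hjp⟩ := Finset.mem_image.1 hp
      obtain ⟨j', hj', hjq⟩ := Finset.mem_image.1 hq
      have hj3 : (HI j).card = 3 := (Finset.mem_filter.1 hj).2
      have hj3' : (HI j').card = 3 := (Finset.mem_filter.1 hj').2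
      have hjj : j ≠ j' := fun h => hpq (by rw [← hjp, ← hjq, h])
      refine ⟨?_, ?_, ?_⟩
      · intro hco
        obtain ⟨hv1, hh1⟩ := hfull j hj3 p.1 (Or.inl (by rw [hjp]))
        obtain ⟨hv2, hh2⟩ := hfull j' hj3' p.1 (Or.inl (by rw [hjq]; exact hco))
        exact hjj (hostedI_unique hσ hε0 hh1 hh2)
      · intro hco
        obtain ⟨hv1, hh1⟩ := hfull j hj3 p.2.1 (Or.inr (Or.inl (by rw [hjp])))
        obtain ⟨hv2, hh2⟩ := hfull j' hj3' p.2.1 (Or.inr (Or.inl (by rw [hjq]; exact hco)))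
        exact hjj (hostedI_unique hσ hε0 hh1 hh2)
      · intro hco
        obtain ⟨hv1, hh1⟩ := hfull j hj3 p.2.2 (Or.inr (Or.inr (by rw [hjp])))
        obtain ⟨hv2, hh2⟩ := hfull j' hj3' p.2.2 (Or.inr (Or.inr (by rw [hjq]; exact hco)))
        exact hjj (hostedI_unique hσ hε0 hh1 hh2)
  -- counting: per-window bound
  have hperj : ∀ j : {t // t ∈ P.T},
      (HI j).card + 2 * (if hostedP P ε σ j then 1 else 0) ≤
        2 + (if (HI j).card = 3 then 1 else 0) := by
    intro j
    by_cases hp : hostedP P ε σ j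
    · rw [hHIP j hp]
      simp [hp]
    · have h3 := hHI3 j
      by_cases h33 : (HI j).card = 3 <;> simp [hp, h33] <;> omega
  have star : (∑ j, (HI j).card) + 2 * B'.card ≤ 2 * (2 * n) + M'.card := by
    have hs := Finset.sum_le_sum
      (fun j (_ : j ∈ (Finset.univ : Finset {t // t ∈ P.T})) => hperj j)
    rw [Finset.sum_add_distrib, Finset.sum_add_distrib, ← Finset.mul_sum,
      ← Finset.card_filter, ← Finset.card_filter, Finset.sum_const, smul_eq_mul,
      hTuniv] at hs
    rw [hB', hM']
    linarith
  -- hosted items are hosted in a unique window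
  set H : Finset {x // x ∈ P.A ∪ P.B ∪ P.C} :=
    Finset.univ.filter (fun x => ∃ j, hostedI P ε σ x j) with hH
  have hHcard : H.card = ∑ j, (HI j).card := by
    have hbi : H = Finset.univ.biUnion HI := by
      ext x
      simp [hH, hHI, Finset.mem_biUnion]
    rw [hbi, Finset.card_biUnion]
    intro j _ j' _ hjj
    rw [Function.onFun, Finset.disjoint_left]
    intro x hx hx'
    exact hjj (hostedI_unique hσ hε0 (Finset.mem_filter.1 hx).2
      (Finset.mem_filter.1 hx').2)
  set fI : Finset {x // x ∈ P.A ∪ P.B ∪ P.C} :=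
    Finset.univ.filter (fun x => ¬ ∃ j, hostedI P ε σ x j) with hfI
  have hfIcard : H.card + fI.card = 3 * n := by
    rw [hH, hfI, Finset.card_filter_add_card_filter_not, hItems]
  set fP : Finset {t // t ∈ P.T} :=
    Finset.univ.filter (fun j => ¬ hostedP P ε σ j) with hfP
  have hfPcard : B'.card + fP.card = 2 * n := by
    rw [hB', hfP, Finset.card_filter_add_card_filter_not, hTuniv]
  have hBM : B'.card + M'.card ≤ 2 * n := by
    rw [← hTuniv, ← Finset.card_union_of_disjoint (by
      rw [Finset.disjoint_left]
      intro j hj hj'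
      have h0 : HI j = ∅ := hHIP j (Finset.mem_filter.1 hj).2
      have h3 : (HI j).card = 3 := (Finset.mem_filter.1 hj').2
      rw [h0] at h3
      simp at h3)]
    exact Finset.card_le_univ _
  -- the grand measure inequality
  have hC0 : (0:ℝ) ≤ C := by
    have hk' : (k : ℝ) ≤ n := by exact_mod_cast hk
    have := mul_nonneg (Nat.cast_nonneg (α := ℝ) k) hε0.le
    rw [hC]; nlinarith
  have main : (fI.card : ℝ) * 3 +
      ((fP.card : ℝ) * ((2+ε)+(2+ε)+(2+ε)) + ((2*n : ℕ) : ℝ) * (9+9+9)) ≤ C := by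
    have hspan3 : ∀ i : P.Idx, (spanS (σ i) (stf P ε i)).Nonempty := fun i =>
      Set.nonempty_Ico.2 (by have := stf_pos P hε0 i; linarith)
    have hFval : ∀ i, Ffun P ε σ i = ∅ ∨
        Ffun P ε σ i = spanS (σ i) (stf P ε i) := by
      intro i
      rcases i with x | (t | b)
      · by_cases h : ∃ j', hostedI P ε σ x j'
        · exact Or.inl (by simp [Ffun, h])
        · exact Or.inr (by simp [Ffun, h])
      · by_cases h : hostedP P ε σ t
        · exact Or.inl (by simp [Ffun, h])
        · exact Or.inr (by simp [Ffun, h])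
      · exact Or.inr rfl
    have hNW2 : ∀ i j : P.Idx, i ≠ j →
        Ffun P ε σ i = spanS (σ i) (stf P ε i) →
        occS (σ i) (stf P ε i) ∩ winS (σ j) (stf P ε j) = ∅ := by
      intro i j hij hFi
      rcases j with x' | (t' | b')
      · exact nowin hσ hij.symm (compat_to_item P ε i x')
      · exact nowin hσ hij.symm (compat_to_prime P ε i t')
      · rcases i with x | (t | b)
        · by_cases h : ∃ j', hostedI P ε σ x j'
          · exfalso
            have h0 : Ffun P ε σ (Sum.inl x) = ∅ := by simp [Ffun, h]
            rw [h0] at hFi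
            exact (hspan3 (Sum.inl x)).ne_empty hFi.symm
          · rw [← Set.not_nonempty_iff_eq_empty]
            exact fun hh => h ⟨b', hh⟩
        · by_cases h : hostedP P ε σ t
          · exfalso
            have h0 : Ffun P ε σ (Sum.inr (Sum.inl t)) = ∅ := by simp [Ffun, h]
            rw [h0] at hFi
            exact (hspan3 _).ne_empty hFi.symm
          · rw [← Set.not_nonempty_iff_eq_empty]
            intro hh
            have hbt := hostedP_eq hσ hh
            subst hbt
            exact h hh
        · exact nowin hσ hij.symm (compat_box_box P ε b b')
    have hFdisj : Pairwise (Function.onFun Disjoint (Ffun P ε σ)) := by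
      intro i j hij
      rcases hFval i with h1 | h1
      · simp [Function.onFun, h1]
      rcases hFval j with h2 | h2
      · simp [Function.onFun, h2]
      rw [Function.onFun, h1, h2]
      exact Set.disjoint_iff_inter_eq_empty.2
        (span_disj' hσ hε0 hij (hNW2 i j hij h1) (hNW2 j i hij.symm h2))
    have hFmeas : ∀ i, MeasurableSet (Ffun P ε σ i) := by
      intro i
      rcases hFval i with h | h <;> rw [h]
      · exact MeasurableSet.empty
      · exact measurableSet_Ico
    have hFsub : ∀ i, Ffun P ε σ i ⊆ Set.Ico (0:ℝ) C := by
      intro i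
      rcases hFval i with h | h <;> rw [h]
      · simp
      · intro y hy
        obtain ⟨hy1, hy2⟩ := hy
        have h1 := hσ.1 i
        have h2 : σ i + (stf P ε i + stf P ε i + stf P ε i) ≤ C := by
          have h3 := hmk i
          rwa [SchedInstance.endTime, dur_eq] at h3
        exact ⟨le_trans h1 hy1, by linarith⟩
    have hvol : ∑ i, volume (Ffun P ε σ i) ≤ ENNReal.ofReal C := by
      rw [← tsum_fintype (L := SummationFilter.unconditional _), ← measure_iUnion hFdisj hFmeas]
      refine le_trans (measure_mono (Set.iUnion_subset hFsub)) ?_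
      rw [Real.volume_Ico, sub_zero]
    rw [Fintype.sum_sum_type, Fintype.sum_sum_type] at hvol
    have hS1 : ∑ x : {x // x ∈ P.A ∪ P.B ∪ P.C}, volume (Ffun P ε σ (Sum.inl x))
        = (fI.card : ℝ≥0∞) * ENNReal.ofReal 3 := by
      have hterm : ∀ x : {x // x ∈ P.A ∪ P.B ∪ P.C},
          volume (Ffun P ε σ (Sum.inl x)) =
          if ∃ j', hostedI P ε σ x j' then 0 else ENNReal.ofReal 3 := by
        intro x
        by_cases h : ∃ j', hostedI P ε σ x j'
        · simp [Ffun, h]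
        · simp only [Ffun, h, if_false, if_neg h, vol_spanS]
          norm_num [stf]
      rw [Finset.sum_congr rfl (fun x _ => hterm x), Finset.sum_ite,
        Finset.sum_const_zero, Finset.sum_const, zero_add, nsmul_eq_mul, hfI]
    have hS2 : ∑ t : {t // t ∈ P.T}, volume (Ffun P ε σ (Sum.inr (Sum.inl t)))
        = (fP.card : ℝ≥0∞) * ENNReal.ofReal ((2+ε)+(2+ε)+(2+ε)) := by
      have hterm : ∀ t : {t // t ∈ P.T},
          volume (Ffun P ε σ (Sum.inr (Sum.inl t))) =
          if hostedP P ε σ t then 0 else ENNReal.ofReal ((2+ε)+(2+ε)+(2+ε)) := by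
        intro t
        by_cases h : hostedP P ε σ t
        · simp [Ffun, h]
        · simp only [Ffun, h, if_false, if_neg h, vol_spanS]
          norm_num [stf]
      rw [Finset.sum_congr rfl (fun t _ => hterm t), Finset.sum_ite,
        Finset.sum_const_zero, Finset.sum_const, zero_add, nsmul_eq_mul, hfP]
    have hS3 : ∑ b : {t // t ∈ P.T}, volume (Ffun P ε σ (Sum.inr (Sum.inr b)))
        = ((2*n : ℕ) : ℝ≥0∞) * ENNReal.ofReal (9+9+9) := by
      have hterm : ∀ b : {t // t ∈ P.T},
          volume (Ffun P ε σ (Sum.inr (Sum.inr b))) = ENNReal.ofReal (9+9+9) := by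
        intro b
        have : Ffun P ε σ (Sum.inr (Sum.inr b)) =
            spanS (σ (Sum.inr (Sum.inr b))) (stf P ε (Sum.inr (Sum.inr b))) := rfl
        rw [this, vol_spanS]
        norm_num [stf]
      rw [Finset.sum_congr rfl (fun b _ => hterm b), Finset.sum_const,
        nsmul_eq_mul, hTuniv]
    rw [hS1, hS2, hS3] at hvol
    have e1 : (fI.card : ℝ≥0∞) * ENNReal.ofReal 3 =
        ENNReal.ofReal ((fI.card : ℝ) * 3) := by
      rw [ENNReal.ofReal_mul (Nat.cast_nonneg _), ENNReal.ofReal_natCast]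
    have e2 : (fP.card : ℝ≥0∞) * ENNReal.ofReal ((2+ε)+(2+ε)+(2+ε)) =
        ENNReal.ofReal ((fP.card : ℝ) * ((2+ε)+(2+ε)+(2+ε))) := by
      rw [ENNReal.ofReal_mul (Nat.cast_nonneg _), ENNReal.ofReal_natCast]
    have e3 : ((2*n : ℕ) : ℝ≥0∞) * ENNReal.ofReal (9+9+9) =
        ENNReal.ofReal (((2*n : ℕ) : ℝ) * (9+9+9)) := by
      rw [ENNReal.ofReal_mul (Nat.cast_nonneg _), ENNReal.ofReal_natCast]
    have p1 : (0:ℝ) ≤ (fI.card : ℝ) * 3 :=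
      mul_nonneg (Nat.cast_nonneg _) (by norm_num)
    have p2 : (0:ℝ) ≤ (fP.card : ℝ) * ((2+ε)+(2+ε)+(2+ε)) :=
      mul_nonneg (Nat.cast_nonneg _) (by linarith)
    have p3 : (0:ℝ) ≤ ((2*n : ℕ) : ℝ) * (9+9+9) :=
      mul_nonneg (Nat.cast_nonneg _) (by norm_num)
    have p23 : (0:ℝ) ≤ (fP.card : ℝ) * ((2+ε)+(2+ε)+(2+ε)) +
        ((2*n : ℕ) : ℝ) * (9+9+9) := by linarith
    rw [e1, e2, e3, ← ENNReal.ofReal_add p2 p3,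
      ← ENNReal.ofReal_add p1 p23] at hvol
    exact (ENNReal.ofReal_le_ofReal_iff hC0).1 hvol
  -- final arithmetic
  refine ⟨M, hMatch, ?_⟩
  rw [hMcard]
  have hkR : (k : ℝ) ≤ (M'.card : ℝ) := by
    have c1 : ((∑ j, (HI j).card : ℕ) : ℝ) + 2 * (B'.card : ℝ) ≤
        2 * (2 * (n:ℝ)) + (M'.card : ℝ) := by exact_mod_cast star
    have c2 : ((H.card : ℕ) : ℝ) = ((∑ j, (HI j).card : ℕ) : ℝ) := by
      exact_mod_cast hHcard
    have c3 : (H.card : ℝ) + (fI.card : ℝ) = 3 * (n:ℝ) := by exact_mod_cast hfIcard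
    have c4 : (B'.card : ℝ) + (fP.card : ℝ) = 2 * (n:ℝ) := by exact_mod_cast hfPcard
    have c5 : (B'.card : ℝ) + (M'.card : ℝ) ≤ 2 * (n:ℝ) := by exact_mod_cast hBM
    have c6 : ((2*n : ℕ) : ℝ) = 2 * (n : ℝ) := by push_cast; ring
    rw [c6] at main
    have hprod : 0 ≤ ε * (2 * (n:ℝ) - (B'.card : ℝ) - (M'.card : ℝ)) :=
      mul_nonneg hε0.le (by linarith)
    nlinarith [hprod, mul_pos hε0 (show (0:ℝ) < 1 - ε by linarith)]
  exact_mod_cast hkR
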